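/- arXiv:2202.08740 — 2 statements merged into one kernel-verified Lean document; each statement's English description precedes it below -/
import Mathlib

section
/- For every three times continuously differentiable matrix field P : ℝ³ → ℝ³ˣ³, the scalar field div(Div(sym Curl P)) vanishes identically, i.e. div Div sym Curl P = 0 at every point of ℝ³. Consequently the range of the operator sym Curl is contained in the kernel of the operator div Div. -/
/-- Partial derivative ∂ⱼ of a scalar field on ℝ³. -/
noncomputable def pd (j : Fin 3) (f : (Fin 3 → ℝ) → ℝ) (x : Fin 3 → ℝ) : ℝ :=
  fderiv ℝ f x (Pi.single j 1)

/-- curl of a vector field on ℝ³. -/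
noncomputable def vcurl (v : (Fin 3 → ℝ) → (Fin 3 → ℝ)) (x : Fin 3 → ℝ) : Fin 3 → ℝ :=
  ![pd 1 (fun y => v y 2) x - pd 2 (fun y => v y 1) x,
    pd 2 (fun y => v y 0) x - pd 0 (fun y => v y 2) x,
    pd 0 (fun y => v y 1) x - pd 1 (fun y => v y 0) x]

/-- divergence of a vector field on ℝ³. -/
noncomputable def vdiv (v : (Fin 3 → ℝ) → (Fin 3 → ℝ)) (x : Fin 3 → ℝ) : ℝ :=
  pd 0 (fun y => v y 0) x + pd 1 (fun y => v y 1) x + pd 2 (fun y => v y 2) x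

/-- Row-wise matrix Curl of a matrix field on ℝ³. -/
noncomputable def MCurl (P : (Fin 3 → ℝ) → Fin 3 → Fin 3 → ℝ) (x : Fin 3 → ℝ) :
    Fin 3 → Fin 3 → ℝ :=
  fun i => vcurl (fun y => P y i) x

/-- Row-wise matrix divergence of a matrix field on ℝ³. -/
noncomputable def MDiv (P : (Fin 3 → ℝ) → Fin 3 → Fin 3 → ℝ) (x : Fin 3 → ℝ) : Fin 3 → ℝ :=
  fun i => vdiv (fun y => P y i) x

/-- Symmetric part of a 3×3 matrix (as a function). -/
noncomputable def msym (M : Fin 3 → Fin 3 → ℝ) : Fin 3 → Fin 3 → ℝ :=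
  fun i j => (M i j + M j i) / 2

lemma contDiff_pd {n : ℕ} {f : (Fin 3 → ℝ) → ℝ} (hf : ContDiff ℝ (n+1 : ℕ) f) (j : Fin 3) :
    ContDiff ℝ (n : ℕ) (pd j f) := by
  have h : ContDiff ℝ (n : ℕ) (fderiv ℝ f) := hf.fderiv_right (by norm_cast)
  exact h.clm_apply contDiff_const

lemma diff_pd {f : (Fin 3 → ℝ) → ℝ} (hf : ContDiff ℝ 2 f) (j : Fin 3) :
    Differentiable ℝ (pd j f) :=
  (contDiff_pd (n := 1) (by exact_mod_cast hf) j).differentiable (by norm_num)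

lemma pd_sub {f g : (Fin 3 → ℝ) → ℝ} {x : Fin 3 → ℝ} (hf : DifferentiableAt ℝ f x)
    (hg : DifferentiableAt ℝ g x) (j : Fin 3) :
    pd j (fun y => f y - g y) x = pd j f x - pd j g x := by
  simp [pd, fderiv_fun_sub hf hg]

lemma pd_add {f g : (Fin 3 → ℝ) → ℝ} {x : Fin 3 → ℝ} (hf : DifferentiableAt ℝ f x)
    (hg : DifferentiableAt ℝ g x) (j : Fin 3) :
    pd j (fun y => f y + g y) x = pd j f x + pd j g x := by
  simp [pd, fderiv_fun_add hf hg]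

lemma pd_div2 {f : (Fin 3 → ℝ) → ℝ} {x : Fin 3 → ℝ} (hf : DifferentiableAt ℝ f x) (j : Fin 3) :
    pd j (fun y => f y / 2) x = pd j f x / 2 := by
  simp only [div_eq_mul_inv, pd, fderiv_mul_const hf]
  simp [ContinuousLinearMap.smul_apply]; ring

lemma pd_comm {f : (Fin 3 → ℝ) → ℝ} (hf : ContDiff ℝ 2 f) (a b : Fin 3) (x : Fin 3 → ℝ) :
    pd a (pd b f) x = pd b (pd a f) x := by
  have hd : DifferentiableAt ℝ (fderiv ℝ f) x :=
    ((hf.fderiv_right (m := 1) (by norm_num)).differentiable (by norm_num)).differentiableAt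
  have hsymm : IsSymmSndFDerivAt ℝ f x := hf.contDiffAt.isSymmSndFDerivAt (by simp [minSmoothness_of_isRCLikeNormedField])
  have key : ∀ v w : Fin 3 → ℝ,
      fderiv ℝ (fun y => fderiv ℝ f y w) x v = fderiv ℝ (fderiv ℝ f) x v w := by
    intro v w
    have : fderiv ℝ (fun y => fderiv ℝ f y w) x
        = (fderiv ℝ f x).comp (fderiv ℝ (fun _ : Fin 3 → ℝ => w) x)
          + (fderiv ℝ (fderiv ℝ f) x).flip w :=
      fderiv_clm_apply hd (differentiableAt_const w)
    simp [this]
  have e : ∀ (c : Fin 3), pd c f = fun y => fderiv ℝ f y (Pi.single c 1) := fun _ => rfl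
  simp only [pd, e]
  rw [key, key, hsymm.eq]

lemma vdiv_vcurl {v : (Fin 3 → ℝ) → (Fin 3 → ℝ)} (hv : ∀ k, ContDiff ℝ 2 (fun y => v y k))
    (x : Fin 3 → ℝ) : vdiv (fun y => vcurl v y) x = 0 := by
  have hd : ∀ (b : Fin 3) (k : Fin 3), DifferentiableAt ℝ (pd b (fun y => v y k)) x :=
    fun b k => (diff_pd (hv k) b).differentiableAt
  simp only [vdiv, vcurl, Matrix.cons_val_zero, Matrix.cons_val_one, Matrix.head_cons,
    Matrix.cons_val_two, Matrix.tail_cons]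
  rw [pd_sub (hd 1 2) (hd 2 1), pd_sub (hd 2 0) (hd 0 2), pd_sub (hd 0 1) (hd 1 0)]
  rw [pd_comm (hv 2) 0 1, pd_comm (hv 0) 1 2, pd_comm (hv 1) 2 0]
  ring

lemma key1 (M : (Fin 3 → ℝ) → Fin 3 → Fin 3 → ℝ)
    (hM : ∀ i j, ContDiff ℝ 2 (fun z => M z i j))
    (hrow : ∀ i y, pd 0 (fun z => M z i 0) y + pd 1 (fun z => M z i 1) y
      + pd 2 (fun z => M z i 2) y = 0) (x : Fin 3 → ℝ) :
    vdiv (fun y => MDiv (fun z => msym (M z)) y) x = 0 := by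
  have hMd : ∀ i j, Differentiable ℝ (fun z => M z i j) :=
    fun i j => (hM i j).differentiable (by norm_num)
  have hpd : ∀ (a : Fin 3) i j, Differentiable ℝ (pd a (fun z => M z i j)) :=
    fun a i j => diff_pd (hM i j) a
  have hF : ∀ i, (fun y => MDiv (fun z => msym (M z)) y i)
      = fun y => (pd 0 (fun z => M z 0 i) y + pd 1 (fun z => M z 1 i) y
          + pd 2 (fun z => M z 2 i) y) / 2 := by
    intro i; funext y
    simp only [MDiv, vdiv, msym]
    rw [pd_div2 (((hMd i 0).fun_add (hMd 0 i)).differentiableAt) 0,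
        pd_div2 (((hMd i 1).fun_add (hMd 1 i)).differentiableAt) 1,
        pd_div2 (((hMd i 2).fun_add (hMd 2 i)).differentiableAt) 2,
        pd_add ((hMd i 0).differentiableAt) ((hMd 0 i).differentiableAt) 0,
        pd_add ((hMd i 1).differentiableAt) ((hMd 1 i).differentiableAt) 1,
        pd_add ((hMd i 2).differentiableAt) ((hMd 2 i).differentiableAt) 2]
    linear_combination (hrow i y) / 2
  have hcol : ∀ j : Fin 3, pd j (pd 0 (fun z => M z j 0)) x + pd j (pd 1 (fun z => M z j 1)) x
      + pd j (pd 2 (fun z => M z j 2)) x = 0 := by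
    intro j
    have hz : (fun y => pd 0 (fun z => M z j 0) y + pd 1 (fun z => M z j 1) y
        + pd 2 (fun z => M z j 2) y) = (fun _ => (0 : ℝ)) := funext (hrow j)
    have h1 : pd j (fun y => pd 0 (fun z => M z j 0) y + pd 1 (fun z => M z j 1) y
        + pd 2 (fun z => M z j 2) y) x
        = pd j (pd 0 (fun z => M z j 0)) x + pd j (pd 1 (fun z => M z j 1)) x
          + pd j (pd 2 (fun z => M z j 2)) x := by
      rw [pd_add (((hpd 0 j 0).fun_add (hpd 1 j 1)).differentiableAt) ((hpd 2 j 2).differentiableAt) j,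
          pd_add ((hpd 0 j 0).differentiableAt) ((hpd 1 j 1).differentiableAt) j]
    rw [← h1, hz]
    simp [pd]
  simp only [vdiv]
  rw [hF 0, hF 1, hF 2]
  rw [pd_div2 (((hpd 0 0 0).fun_add (hpd 1 1 0)).fun_add (hpd 2 2 0)).differentiableAt 0,
      pd_div2 (((hpd 0 0 1).fun_add (hpd 1 1 1)).fun_add (hpd 2 2 1)).differentiableAt 1,
      pd_div2 (((hpd 0 0 2).fun_add (hpd 1 1 2)).fun_add (hpd 2 2 2)).differentiableAt 2]
  rw [pd_add ((hpd 0 0 0).fun_add (hpd 1 1 0)).differentiableAt ((hpd 2 2 0)).differentiableAt 0,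
      pd_add ((hpd 0 0 0)).differentiableAt ((hpd 1 1 0)).differentiableAt 0,
      pd_add ((hpd 0 0 1).fun_add (hpd 1 1 1)).differentiableAt ((hpd 2 2 1)).differentiableAt 1,
      pd_add ((hpd 0 0 1)).differentiableAt ((hpd 1 1 1)).differentiableAt 1,
      pd_add ((hpd 0 0 2).fun_add (hpd 1 1 2)).differentiableAt ((hpd 2 2 2)).differentiableAt 2,
      pd_add ((hpd 0 0 2)).differentiableAt ((hpd 1 1 2)).differentiableAt 2]
  rw [pd_comm (hM 1 0) 0 1, pd_comm (hM 2 0) 0 2,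
      pd_comm (hM 0 1) 1 0, pd_comm (hM 2 1) 1 2,
      pd_comm (hM 0 2) 2 0, pd_comm (hM 1 2) 2 1]
  linarith [hcol 0, hcol 1, hcol 2]

/-- For every C³ matrix field `P : ℝ³ → ℝ³ˣ³`, `div (Div (sym (Curl P))) = 0` everywhere;
consequently the range of `sym Curl` is contained in the kernel of `div Div`. -/
theorem divDiv_symCurl_eq_zero (P : (Fin 3 → ℝ) → Fin 3 → Fin 3 → ℝ)
    (hP : ContDiff ℝ 3 P) :
    ∀ x : Fin 3 → ℝ, vdiv (fun y => MDiv (fun z => msym (MCurl P z)) y) x = 0 := by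
  have hPc : ∀ i k, ContDiff ℝ 3 (fun y => P y i k) :=
    fun i k => contDiff_pi.mp (contDiff_pi.mp hP i) k
  have hg : ∀ (a : Fin 3) i k, ContDiff ℝ 2 (pd a (fun y => P y i k)) := by
    intro a i k
    exact_mod_cast contDiff_pd (n := 2) (by exact_mod_cast hPc i k) a
  have hM : ∀ i j, ContDiff ℝ 2 (fun z => MCurl P z i j) := by
    intro i j
    fin_cases j <;>
      simp only [MCurl, vcurl, Matrix.cons_val_zero, Matrix.cons_val_one, Matrix.head_cons,
        Matrix.cons_val_two, Matrix.tail_cons, Fin.isValue] <;>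
      [exact (hg 1 i 2).sub (hg 2 i 1); exact (hg 2 i 0).sub (hg 0 i 2);
       exact (hg 0 i 1).sub (hg 1 i 0)]
  have hrow : ∀ i y, pd 0 (fun z => MCurl P z i 0) y + pd 1 (fun z => MCurl P z i 1) y
      + pd 2 (fun z => MCurl P z i 2) y = 0 := by
    intro i y
    exact vdiv_vcurl (v := fun y' => P y' i) (fun k => (hPc i k).of_le (by norm_num)) y
  exact fun x => key1 (MCurl P) hM hrow x
end

section
/- Let J ∈ ℝ³ˣ³ be invertible, b ∈ ℝ³, and let φ : ℝ³ → ℝ³ be the affine map φ(ξ) = Jξ + b. Let v : ℝ³ → ℝ³ be continuously differentiable and define the covariant Piola transform u : ℝ³ → ℝ³ by u(x) = J⁻ᵀ v(φ⁻¹(x)). Then for every x ∈ ℝ³, curl u (x) = (det J)⁻¹ · J · (curl v)(φ⁻¹(x)); i.e. the curl of a covariantly transformed vector field is given by the contravariant Piola transformation. -/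
open Matrix

set_option maxHeartbeats 1000000 in
/-- Covariant Piola transform: if `φ ξ = J ξ + b` with `J` invertible and
`u ∘ φ = J⁻ᵀ · (v ∘ id)`, i.e. `u (φ ξ) = J⁻ᵀ v ξ`, then the curl of `u` is given by the
contravariant Piola transformation: `curl u (φ ξ) = (det J)⁻¹ J (curl v ξ)`. -/
theorem curl_covariant_piola (J : Matrix (Fin 3) (Fin 3) ℝ) (hJ : IsUnit J.det)
    (b : Fin 3 → ℝ) (φ : (Fin 3 → ℝ) → Fin 3 → ℝ)
    (hφ : ∀ ξ : Fin 3 → ℝ, φ ξ = J.mulVec ξ + b)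
    (v : (Fin 3 → ℝ) → Fin 3 → ℝ) (hv : ContDiff ℝ 1 v)
    (u : (Fin 3 → ℝ) → Fin 3 → ℝ)
    (hu : ∀ ξ : Fin 3 → ℝ, u (φ ξ) = (Jᵀ)⁻¹.mulVec (v ξ)) :
    ∀ ξ : Fin 3 → ℝ, vcurl u (φ ξ) = (J.det)⁻¹ • J.mulVec (vcurl v ξ) := by
  intro ξ
  have hdet : J.det ≠ 0 := by
    intro h; rw [h] at hJ; exact (by simpa using hJ : IsUnit (0:ℝ)).ne_zero rfl
  have hvd : Differentiable ℝ v := hv.differentiable one_ne_zero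
  set ψ : (Fin 3 → ℝ) → (Fin 3 → ℝ) := fun x => J⁻¹.mulVec (x - b) with hψdef
  have hφψ : ∀ x, φ (ψ x) = x := by
    intro x
    rw [hφ, hψdef]
    simp [Matrix.mulVec_mulVec, Matrix.mul_nonsing_inv _ hJ]
  have hψφ : ψ (φ ξ) = ξ := by
    rw [hφ, hψdef]
    simp [Matrix.mulVec_mulVec, Matrix.nonsing_inv_mul _ hJ]
  have huexp : u = fun x => (Jᵀ)⁻¹.mulVec (v (ψ x)) := by
    funext x
    have := hu (ψ x)
    rwa [hφψ] at this
  set Lψ : (Fin 3 → ℝ) →L[ℝ] (Fin 3 → ℝ) :=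
    LinearMap.toContinuousLinearMap (Matrix.mulVecLin (J⁻¹ : Matrix (Fin 3) (Fin 3) ℝ)) with hLψ
  set LK : (Fin 3 → ℝ) →L[ℝ] (Fin 3 → ℝ) :=
    LinearMap.toContinuousLinearMap (Matrix.mulVecLin ((Jᵀ)⁻¹ : Matrix (Fin 3) (Fin 3) ℝ)) with hLK
  have hψd : ∀ x, HasFDerivAt ψ Lψ x := by
    intro x
    have h1 : HasFDerivAt (fun x : Fin 3 → ℝ => Lψ x - J⁻¹.mulVec b) Lψ x :=
      Lψ.hasFDerivAt.sub_const _
    have h2 : ψ = fun x : Fin 3 → ℝ => Lψ x - J⁻¹.mulVec b := by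
      funext x; simp [hψdef, hLψ, Matrix.mulVec_sub]
    rw [h2]; exact h1
  have hud : ∀ x, HasFDerivAt u ((LK.comp (fderiv ℝ v (ψ x))).comp Lψ) x := by
    intro x
    rw [huexp]
    have := LK.hasFDerivAt.comp x (((hvd (ψ x)).hasFDerivAt).comp x (hψd x))
    exact this
  have hpd : ∀ i j : Fin 3, pd j (fun y => u y i) (φ ξ) =
      (Jᵀ)⁻¹.mulVec (fderiv ℝ v ξ (J⁻¹.mulVec (Pi.single j 1))) i := by
    intro i j
    have h1 : HasFDerivAt (fun y => u y i)
        ((ContinuousLinearMap.proj i).comp ((LK.comp (fderiv ℝ v (ψ (φ ξ)))).comp Lψ)) (φ ξ) := by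
      exact ((ContinuousLinearMap.proj i).hasFDerivAt.comp _ (hud (φ ξ)))
    rw [pd, h1.fderiv]
    simp [hψφ, hLK, hLψ]
  set g : Fin 3 → Fin 3 → ℝ := fun l k => fderiv ℝ v ξ (Pi.single l 1) k with hgdef
  have hg : ∀ l k : Fin 3, pd l (fun y => v y k) ξ = g l k := by
    intro l k
    have h1 : HasFDerivAt (fun y => v y k)
        ((ContinuousLinearMap.proj k).comp (fderiv ℝ v ξ)) ξ := by
      exact
        ((ContinuousLinearMap.proj k).hasFDerivAt.comp _ (hvd ξ).hasFDerivAt)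
    rw [pd, h1.fderiv]
    simp [hgdef]
  have hDw : ∀ (w : Fin 3 → ℝ) (k : Fin 3),
      fderiv ℝ v ξ w k = w 0 * g 0 k + w 1 * g 1 k + w 2 * g 2 k := by
    intro w k
    have hw : w = w 0 • (Pi.single (0:Fin 3) (1:ℝ) : Fin 3 → ℝ) + w 1 • (Pi.single (1:Fin 3) (1:ℝ) : Fin 3 → ℝ) + w 2 • (Pi.single (2:Fin 3) (1:ℝ) : Fin 3 → ℝ) := by
      funext l; fin_cases l <;> simp [Pi.single_apply]
    conv_lhs => rw [hw]
    simp [hgdef]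
  have hJinv : J⁻¹ = J.det⁻¹ • J.adjugate := by
    rw [Matrix.inv_def, Ring.inverse_eq_inv']
  have hJTinv : (Jᵀ)⁻¹ = J.det⁻¹ • (J.adjugate)ᵀ := by
    rw [← Matrix.transpose_nonsing_inv, hJinv, Matrix.transpose_smul]
  have hpd2 : ∀ i j : Fin 3, pd j (fun y => u y i) (φ ξ) =
      (Jᵀ)⁻¹ i 0 * (J⁻¹ 0 j * g 0 0 + J⁻¹ 1 j * g 1 0 + J⁻¹ 2 j * g 2 0)
    + (Jᵀ)⁻¹ i 1 * (J⁻¹ 0 j * g 0 1 + J⁻¹ 1 j * g 1 1 + J⁻¹ 2 j * g 2 1)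
    + (Jᵀ)⁻¹ i 2 * (J⁻¹ 0 j * g 0 2 + J⁻¹ 1 j * g 1 2 + J⁻¹ 2 j * g 2 2) := by
    intro i j
    rw [hpd i j]
    rw [show ((Jᵀ)⁻¹.mulVec (fderiv ℝ v ξ (J⁻¹.mulVec (Pi.single j 1))) i) =
      (Jᵀ)⁻¹ i 0 * fderiv ℝ v ξ (J⁻¹.mulVec (Pi.single j 1)) 0
      + (Jᵀ)⁻¹ i 1 * fderiv ℝ v ξ (J⁻¹.mulVec (Pi.single j 1)) 1
      + (Jᵀ)⁻¹ i 2 * fderiv ℝ v ξ (J⁻¹.mulVec (Pi.single j 1)) 2 by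
        simp [Matrix.mulVec, dotProduct, Fin.sum_univ_three]]
    rw [hDw _ 0, hDw _ 1, hDw _ 2]
    simp [Matrix.mulVec_single]
  have hKe : ∀ i j : Fin 3, (Jᵀ)⁻¹ i j = J.det⁻¹ * J.adjugate j i := by
    intro i j; rw [hJTinv]; simp
  have hIe : ∀ i j : Fin 3, J⁻¹ i j = J.det⁻¹ * J.adjugate i j := by
    intro i j; rw [hJinv]; simp
  have hadj := Matrix.adjugate_fin_three J
  have hmul : ∀ (w : Fin 3 → ℝ) (i : Fin 3),
      J.mulVec w i = J i 0 * w 0 + J i 1 * w 1 + J i 2 * w 2 := by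
    intro w i; simp [Matrix.mulVec, dotProduct, Fin.sum_univ_three]
  have case0 : vcurl u (φ ξ) 0 = (J.det⁻¹ • J.mulVec (vcurl v ξ)) 0 := by
    simp only [vcurl, Pi.smul_apply, smul_eq_mul, Matrix.cons_val_zero,
      Matrix.cons_val_one, Matrix.head_cons, Matrix.cons_val_two, Matrix.tail_cons]
    rw [hmul]
    rw [hpd2, hpd2, hg, hg, hg, hg, hg, hg]
    simp only [hKe, hIe, hadj, Matrix.cons_val', Matrix.cons_val_zero, Matrix.cons_val_one,
      Matrix.head_cons, Matrix.empty_val', Matrix.cons_val_fin_one, Matrix.cons_val_two,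
      Matrix.tail_cons, Matrix.of_apply, Matrix.vecHead, Matrix.vecTail,
      Function.comp_apply, Fin.succ_zero_eq_one, Fin.succ_one_eq_two]
    field_simp
    rw [Matrix.det_fin_three]
    ring
  have case1 : vcurl u (φ ξ) 1 = (J.det⁻¹ • J.mulVec (vcurl v ξ)) 1 := by
    simp only [vcurl, Pi.smul_apply, smul_eq_mul, Matrix.cons_val_zero,
      Matrix.cons_val_one, Matrix.head_cons, Matrix.cons_val_two, Matrix.tail_cons]
    rw [hmul]
    rw [hpd2, hpd2, hg, hg, hg, hg, hg, hg]
    simp only [hKe, hIe, hadj, Matrix.cons_val', Matrix.cons_val_zero, Matrix.cons_val_one,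
      Matrix.head_cons, Matrix.empty_val', Matrix.cons_val_fin_one, Matrix.cons_val_two,
      Matrix.tail_cons, Matrix.of_apply, Matrix.vecHead, Matrix.vecTail,
      Function.comp_apply, Fin.succ_zero_eq_one, Fin.succ_one_eq_two]
    field_simp
    rw [Matrix.det_fin_three]
    ring
  have case2 : vcurl u (φ ξ) 2 = (J.det⁻¹ • J.mulVec (vcurl v ξ)) 2 := by
    simp only [vcurl, Pi.smul_apply, smul_eq_mul, Matrix.cons_val_zero,
      Matrix.cons_val_one, Matrix.head_cons, Matrix.cons_val_two, Matrix.tail_cons]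
    rw [hmul]
    rw [hpd2, hpd2, hg, hg, hg, hg, hg, hg]
    simp only [hKe, hIe, hadj, Matrix.cons_val', Matrix.cons_val_zero, Matrix.cons_val_one,
      Matrix.head_cons, Matrix.empty_val', Matrix.cons_val_fin_one, Matrix.cons_val_two,
      Matrix.tail_cons, Matrix.of_apply, Matrix.vecHead, Matrix.vecTail,
      Function.comp_apply, Fin.succ_zero_eq_one, Fin.succ_one_eq_two]
    field_simp
    rw [Matrix.det_fin_three]
    ring
  funext i
  fin_cases i
  · exact case0
  · exact case1
  · exact case2
end
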